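/- Let k be a field of characteristic 2 and B an n×n matrix over k. Then det([[0,B],[Bᵀ,0]] + I_{2n}) = Σ_{M ⊆ B} per(M), squared — equivalently det(A + I_{2n}) = (Σ_{M} per(M))² where M ranges over all square submatrices of B (with the empty submatrix contributing 1) — and this sum equals per*(B). -/

import Mathlib

/-- The partial permanent of an `n × n` matrix: the sum over all injective
partial maps `π` from `{1,…,n}` to itself of `∏_{i ∈ dom π} B i (π i)`. -/
noncomputable def partialPermanent {R : Type*} [CommRing R] {n : ℕ}
    (B : Matrix (Fin n) (Fin n) R) : R :=
  ∑ S : Finset (Fin n), ∑ π : (↥S ↪ Fin n), ∏ i : ↥S, B i.1 (π i)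

/-- The sum of the permanents of all square submatrices `B[I,J]` of `B`
(subsets `I`, `J` with `|I| = |J|`; when `|I| ≠ |J|` there is no bijection
`I ≃ J` so the inner sum is `0`; the empty submatrix contributes `1`). -/
noncomputable def subPermanentSum {R : Type*} [CommRing R] {n : ℕ}
    (B : Matrix (Fin n) (Fin n) R) : R :=
  ∑ I : Finset (Fin n), ∑ J : Finset (Fin n),
    ∑ e : (↥I ≃ ↥J), ∏ i : ↥I, B i.1 (e i).1


open Matrix Equiv Finset

variable {n : ℕ}

def sumRight {α β : Type*} : ∀ (x : α ⊕ β), x.isRight → β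
  | .inr b, _ => b

def sumLeft {α β : Type*} : ∀ (x : α ⊕ β), x.isLeft → α
  | .inl a, _ => a

theorem sumRight_spec {α β : Type*} (x : α ⊕ β) (h : x.isRight) :
    x = Sum.inr (sumRight x h) := by
  cases x
  · cases h
  · rfl

theorem sumLeft_spec {α β : Type*} (x : α ⊕ β) (h : x.isLeft) :
    x = Sum.inl (sumLeft x h) := by
  cases x
  · rfl
  · cases h

def quadPerm (I J : Finset (Fin n)) (e : ↥I ≃ ↥J) (f : ↥J ≃ ↥I) :
    Equiv.Perm (Fin n ⊕ Fin n) where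
  toFun x := match x with
    | .inl i => if h : i ∈ I then .inr (e ⟨i, h⟩ : ↥J).1 else .inl i
    | .inr j => if h : j ∈ J then .inl (f ⟨j, h⟩ : ↥I).1 else .inr j
  invFun x := match x with
    | .inl i => if h : i ∈ I then .inr (f.symm ⟨i, h⟩ : ↥J).1 else .inl i
    | .inr j => if h : j ∈ J then .inl (e.symm ⟨j, h⟩ : ↥I).1 else .inr j
  left_inv := by
    rintro (i | j)
    · by_cases h : i ∈ I
      · simp only [dif_pos h]
        rw [dif_pos (e ⟨i, h⟩).2]
        simp
      · simp [h]
    · by_cases h : j ∈ J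
      · simp only [dif_pos h]
        rw [dif_pos (f ⟨j, h⟩).2]
        simp
      · simp [h]
  right_inv := by
    rintro (i | j)
    · by_cases h : i ∈ I
      · simp only [dif_pos h]
        rw [dif_pos (f.symm ⟨i, h⟩).2]
        simp
      · simp [h]
    · by_cases h : j ∈ J
      · simp only [dif_pos h]
        rw [dif_pos (e.symm ⟨j, h⟩).2]
        simp
      · simp [h]

@[simp] theorem quadPerm_inl_mem (I J : Finset (Fin n)) (e : ↥I ≃ ↥J) (f : ↥J ≃ ↥I)
    (i : Fin n) (h : i ∈ I) : quadPerm I J e f (.inl i) = .inr (e ⟨i, h⟩ : ↥J).1 :=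
  dif_pos h

@[simp] theorem quadPerm_inl_not_mem (I J : Finset (Fin n)) (e : ↥I ≃ ↥J) (f : ↥J ≃ ↥I)
    (i : Fin n) (h : i ∉ I) : quadPerm I J e f (.inl i) = .inl i :=
  dif_neg h

@[simp] theorem quadPerm_inr_mem (I J : Finset (Fin n)) (e : ↥I ≃ ↥J) (f : ↥J ≃ ↥I)
    (j : Fin n) (h : j ∈ J) : quadPerm I J e f (.inr j) = .inl (f ⟨j, h⟩ : ↥I).1 :=
  dif_pos h

@[simp] theorem quadPerm_inr_not_mem (I J : Finset (Fin n)) (e : ↥I ≃ ↥J) (f : ↥J ≃ ↥I)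
    (j : Fin n) (h : j ∉ J) : quadPerm I J e f (.inr j) = .inr j :=
  dif_neg h

section Weight
variable {R : Type*} [CommRing R]

theorem prod_quadPerm (B : Matrix (Fin n) (Fin n) R) (I J : Finset (Fin n))
    (e : ↥I ≃ ↥J) (f : ↥J ≃ ↥I) :
    ∏ x : Fin n ⊕ Fin n,
        (fromBlocks 1 B B.transpose 1) (quadPerm I J e f x) x
      = (∏ i : ↥I, B i.1 (e i).1) * ∏ j : ↥J, B (f j).1 j.1 := by
  rw [Fintype.prod_sum_type]
  congr 1
  · rw [← Finset.prod_mul_prod_compl I]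
    have h2 : (∏ i ∈ Iᶜ,
        (fromBlocks 1 B B.transpose 1) (quadPerm I J e f (Sum.inl i)) (Sum.inl i)) = 1 := by
      refine Finset.prod_eq_one fun i hi => ?_
      rw [quadPerm_inl_not_mem _ _ _ _ _ (Finset.mem_compl.mp hi)]
      simp [Matrix.fromBlocks_apply₁₁]
    rw [h2, mul_one, ← Finset.prod_coe_sort I]
    refine Finset.prod_congr rfl fun i _ => ?_
    rw [quadPerm_inl_mem _ _ _ _ _ i.2]
    simp [Matrix.fromBlocks_apply₂₁]
  · rw [← Finset.prod_mul_prod_compl J]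
    have h2 : (∏ j ∈ Jᶜ,
        (fromBlocks 1 B B.transpose 1) (quadPerm I J e f (Sum.inr j)) (Sum.inr j)) = 1 := by
      refine Finset.prod_eq_one fun j hj => ?_
      rw [quadPerm_inr_not_mem _ _ _ _ _ (Finset.mem_compl.mp hj)]
      simp [Matrix.fromBlocks_apply₂₂]
    rw [h2, mul_one, ← Finset.prod_coe_sort J]
    refine Finset.prod_congr rfl fun j _ => ?_
    rw [quadPerm_inr_mem _ _ _ _ _ j.2]
    simp [Matrix.fromBlocks_apply₁₂]

def IsGood (σ : Equiv.Perm (Fin n ⊕ Fin n)) : Prop :=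
  (∀ i : Fin n, (σ (.inl i)).isLeft → σ (.inl i) = .inl i) ∧
  (∀ j : Fin n, (σ (.inr j)).isRight → σ (.inr j) = .inr j)

theorem prod_eq_zero_of_not_good (B : Matrix (Fin n) (Fin n) R)
    (σ : Equiv.Perm (Fin n ⊕ Fin n)) (h : ¬ IsGood σ) :
    ∏ x : Fin n ⊕ Fin n, (fromBlocks 1 B B.transpose 1) (σ x) x = 0 := by
  rw [IsGood, not_and_or] at h
  rcases h with h | h
  · push_neg at h
    obtain ⟨i, hL, hne⟩ := h
    obtain ⟨i', hi'⟩ : ∃ i', σ (.inl i) = .inl i' := ⟨sumLeft _ hL, sumLeft_spec _ hL⟩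
    refine Finset.prod_eq_zero (Finset.mem_univ (Sum.inl i)) ?_
    rw [hi', Matrix.fromBlocks_apply₁₁]
    exact Matrix.one_apply_ne fun hc => hne (by rw [hi', hc])
  · push_neg at h
    obtain ⟨j, hR, hne⟩ := h
    obtain ⟨j', hj'⟩ : ∃ j', σ (.inr j) = .inr j' := ⟨sumRight _ hR, sumRight_spec _ hR⟩
    refine Finset.prod_eq_zero (Finset.mem_univ (Sum.inr j)) ?_
    rw [hj', Matrix.fromBlocks_apply₂₂]
    exact Matrix.one_apply_ne fun hc => hne (by rw [hj', hc])

end Weight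

theorem isGood_quadPerm (I J : Finset (Fin n)) (e : ↥I ≃ ↥J) (f : ↥J ≃ ↥I) :
    IsGood (quadPerm I J e f) := by
  constructor
  · intro i hL
    by_cases h : i ∈ I
    · rw [quadPerm_inl_mem _ _ _ _ _ h] at hL ⊢
      cases hL
    · exact quadPerm_inl_not_mem _ _ _ _ _ h
  · intro j hR
    by_cases h : j ∈ J
    · rw [quadPerm_inr_mem _ _ _ _ _ h] at hR ⊢
      cases hR
    · exact quadPerm_inr_not_mem _ _ _ _ _ h

abbrev Quad (n : ℕ) := Σ I : Finset (Fin n), Σ J : Finset (Fin n), (↥I ≃ ↥J) × (↥J ≃ ↥I)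

def qPerm (q : Quad n) : Equiv.Perm (Fin n ⊕ Fin n) := quadPerm q.1 q.2.1 q.2.2.1 q.2.2.2

theorem qPerm_injective : Function.Injective (qPerm (n := n)) := by
  rintro ⟨I, J, e, f⟩ ⟨I', J', e', f'⟩ h
  have hx : ∀ x, quadPerm I J e f x = quadPerm I' J' e' f' x := fun x => by
    simpa [qPerm] using congrArg (fun σ : Equiv.Perm (Fin n ⊕ Fin n) => σ x) h
  have hI : I = I' := by
    ext i
    constructor
    · intro hi
      by_contra hi'
      have := hx (Sum.inl i)
      rw [quadPerm_inl_mem _ _ _ _ _ hi, quadPerm_inl_not_mem _ _ _ _ _ hi'] at this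
      cases this
    · intro hi
      by_contra hi'
      have := hx (Sum.inl i)
      rw [quadPerm_inl_mem _ _ _ _ _ hi, quadPerm_inl_not_mem _ _ _ _ _ hi'] at this
      cases this
  subst hI
  have hJ : J = J' := by
    ext j
    constructor
    · intro hj
      by_contra hj'
      have := hx (Sum.inr j)
      rw [quadPerm_inr_mem _ _ _ _ _ hj, quadPerm_inr_not_mem _ _ _ _ _ hj'] at this
      cases this
    · intro hj
      by_contra hj'
      have := hx (Sum.inr j)
      rw [quadPerm_inr_mem _ _ _ _ _ hj, quadPerm_inr_not_mem _ _ _ _ _ hj'] at this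
      cases this
  subst hJ
  have he : e = e' := by
    refine Equiv.ext fun i => Subtype.ext ?_
    have := hx (Sum.inl i.1)
    rw [quadPerm_inl_mem _ _ _ _ _ i.2, quadPerm_inl_mem _ _ _ _ _ i.2] at this
    simpa using this
  have hf : f = f' := by
    refine Equiv.ext fun j => Subtype.ext ?_
    have := hx (Sum.inr j.1)
    rw [quadPerm_inr_mem _ _ _ _ _ j.2, quadPerm_inr_mem _ _ _ _ _ j.2] at this
    simpa using this
  rw [he, hf]

theorem exists_quad_of_good (σ : Equiv.Perm (Fin n ⊕ Fin n)) (hσ : IsGood σ) :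
    ∃ q : Quad n, qPerm q = σ := by
  classical
  set I : Finset (Fin n) := Finset.univ.filter (fun i => (σ (.inl i)).isRight) with hIdef
  set J : Finset (Fin n) := Finset.univ.filter (fun j => (σ (.inr j)).isLeft) with hJdef
  have memI : ∀ i : Fin n, i ∈ I ↔ (σ (.inl i)).isRight := by
    intro i; simp [hIdef]
  have memJ : ∀ j : Fin n, j ∈ J ↔ (σ (.inr j)).isLeft := by
    intro j; simp [hJdef]
  -- e
  have key1 : ∀ (i : Fin n) (h : (σ (.inl i)).isRight),
      (σ (.inr (sumRight (σ (.inl i)) h))).isLeft := by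
    intro i h
    set j := sumRight (σ (.inl i)) h with hjdef
    have hj : σ (.inl i) = .inr j := sumRight_spec _ h
    rcases hLR : σ (.inr j) with i' | j'
    · rfl
    · exfalso
      have hgood := hσ.2 j (by rw [hLR]; rfl)
      have : Sum.inl i = Sum.inr j := σ.injective (by rw [hj, hgood])
      cases this
  let eFun : ↥I → ↥J := fun i =>
    ⟨sumRight (σ (.inl i.1)) ((memI i.1).mp i.2),
      (memJ _).mpr (key1 i.1 ((memI i.1).mp i.2))⟩
  have eSpec : ∀ i : ↥I, σ (.inl i.1) = .inr (eFun i).1 := fun i =>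
    sumRight_spec _ ((memI i.1).mp i.2)
  have eInj : Function.Injective eFun := by
    intro a b hab
    have : σ (.inl a.1) = σ (.inl b.1) := by
      rw [eSpec a, eSpec b, hab]
    exact Subtype.ext (by simpa using σ.injective this)
  have eSurj : Function.Surjective eFun := by
    intro jj
    have hjL : (σ (.inr jj.1)).isLeft := (memJ jj.1).mp jj.2
    have hx : (σ.symm (.inr jj.1)).isLeft := by
      rcases hx' : σ.symm (.inr jj.1) with i | j'
      · rfl
      · exfalso
        have h1 : σ (.inr j') = .inr jj.1 := by
          rw [← hx', Equiv.apply_symm_apply]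
        have hgood := hσ.2 j' (by rw [h1]; rfl)
        have : jj.1 = j' := by
          have := h1.symm.trans hgood
          exact (Sum.inr.injEq _ _ ▸ this)
        subst this
        rw [h1] at hjL
        cases hjL
    refine ⟨⟨sumLeft _ hx, ?_⟩, ?_⟩
    · have h1 : σ (.inl (sumLeft _ hx)) = .inr jj.1 := by
        rw [← sumLeft_spec _ hx, Equiv.apply_symm_apply]
      rw [memI, h1]; rfl
    · apply Subtype.ext
      have h1 : σ (.inl (sumLeft _ hx)) = .inr jj.1 := by
        rw [← sumLeft_spec _ hx, Equiv.apply_symm_apply]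
      have h2 := eSpec ⟨sumLeft _ hx, by rw [memI, h1]; rfl⟩
      exact Sum.inr_injective (h2.symm.trans h1)
  -- f
  have key2 : ∀ (j : Fin n) (h : (σ (.inr j)).isLeft),
      (σ (.inl (sumLeft (σ (.inr j)) h))).isRight := by
    intro j h
    set i := sumLeft (σ (.inr j)) h with hidef
    have hi : σ (.inr j) = .inl i := sumLeft_spec _ h
    rcases hLR : σ (.inl i) with i' | j'
    · exfalso
      have hgood := hσ.1 i (by rw [hLR]; rfl)
      have : Sum.inr j = Sum.inl i := σ.injective (by rw [hi, hgood])
      cases this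
    · rfl
  let fFun : ↥J → ↥I := fun j =>
    ⟨sumLeft (σ (.inr j.1)) ((memJ j.1).mp j.2),
      (memI _).mpr (key2 j.1 ((memJ j.1).mp j.2))⟩
  have fSpec : ∀ j : ↥J, σ (.inr j.1) = .inl (fFun j).1 := fun j =>
    sumLeft_spec _ ((memJ j.1).mp j.2)
  have fInj : Function.Injective fFun := by
    intro a b hab
    have : σ (.inr a.1) = σ (.inr b.1) := by
      rw [fSpec a, fSpec b, hab]
    exact Subtype.ext (by simpa using σ.injective this)
  have fSurj : Function.Surjective fFun := by
    intro ii
    have hiR : (σ (.inl ii.1)).isRight := (memI ii.1).mp ii.2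
    have hx : (σ.symm (.inl ii.1)).isRight := by
      rcases hx' : σ.symm (.inl ii.1) with i' | j
      · exfalso
        have h1 : σ (.inl i') = .inl ii.1 := by
          rw [← hx', Equiv.apply_symm_apply]
        have hgood := hσ.1 i' (by rw [h1]; rfl)
        have : ii.1 = i' := by
          have := h1.symm.trans hgood
          exact (Sum.inl.injEq _ _ ▸ this)
        subst this
        rw [h1] at hiR
        cases hiR
      · rfl
    refine ⟨⟨sumRight _ hx, ?_⟩, ?_⟩
    · have h1 : σ (.inr (sumRight _ hx)) = .inl ii.1 := by
        rw [← sumRight_spec _ hx, Equiv.apply_symm_apply]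
      rw [memJ, h1]; rfl
    · apply Subtype.ext
      have h1 : σ (.inr (sumRight _ hx)) = .inl ii.1 := by
        rw [← sumRight_spec _ hx, Equiv.apply_symm_apply]
      have h2 := fSpec ⟨sumRight _ hx, by rw [memJ, h1]; rfl⟩
      exact Sum.inl_injective (h2.symm.trans h1)
  refine ⟨⟨I, J, Equiv.ofBijective eFun ⟨eInj, eSurj⟩, Equiv.ofBijective fFun ⟨fInj, fSurj⟩⟩, ?_⟩
  refine Equiv.ext fun x => ?_
  rcases x with i | j
  · by_cases h : i ∈ I
    · rw [qPerm]
      rw [quadPerm_inl_mem _ _ _ _ _ h]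
      exact (eSpec ⟨i, h⟩).symm
    · rw [qPerm, quadPerm_inl_not_mem _ _ _ _ _ h]
      rcases hcase : σ (.inl i) with i' | j'
      · exact ((hσ.1 i (by rw [hcase]; rfl)).symm).trans hcase
      · exact absurd ((memI i).mpr (by rw [hcase]; rfl)) h
  · by_cases h : j ∈ J
    · rw [qPerm, quadPerm_inr_mem _ _ _ _ _ h]
      exact (fSpec ⟨j, h⟩).symm
    · rw [qPerm, quadPerm_inr_not_mem _ _ _ _ _ h]
      rcases hcase : σ (.inr j) with i' | j'
      · exact absurd ((memJ j).mpr (by rw [hcase]; rfl)) h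
      · exact ((hσ.2 j (by rw [hcase]; rfl)).symm).trans hcase

theorem subPermanentSum_eq_partialPermanent {R : Type*} [CommRing R]
    (B : Matrix (Fin n) (Fin n) R) : subPermanentSum B = partialPermanent B := by
  classical
  simp only [subPermanentSum, partialPermanent]
  refine Finset.sum_congr rfl fun I _ => ?_
  rw [← Finset.sum_fiberwise_of_maps_to
    (g := fun π : ↥I ↪ Fin n => Finset.univ.map π) (t := Finset.univ)
    (fun _ _ => Finset.mem_univ _)]
  refine Finset.sum_congr rfl fun J _ => ?_
  refine Finset.sum_bij
    (i := fun (e : ↥I ≃ ↥J) _ =>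
      e.toEmbedding.trans (Function.Embedding.subtype fun x => x ∈ J)) ?_ ?_ ?_ ?_
  · intro e _
    refine Finset.mem_filter.mpr ⟨Finset.mem_univ _, ?_⟩
    ext x
    simp only [Finset.mem_map, Finset.mem_univ, Function.Embedding.trans_apply,
      Equiv.coe_toEmbedding, Function.Embedding.coe_subtype, true_and]
    constructor
    · rintro ⟨a, rfl⟩
      exact (e a).2
    · intro hx
      exact ⟨e.symm ⟨x, hx⟩, by simp⟩
  · intro e1 _ e2 _ h
    refine Equiv.ext fun i => Subtype.ext ?_
    exact DFunLike.congr_fun h i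
  · intro π hπ
    have hJ : Finset.univ.map π = J := (Finset.mem_filter.mp hπ).2
    have hmem : ∀ i : ↥I, π i ∈ J := fun i => by
      rw [← hJ]; exact Finset.mem_map.mpr ⟨i, Finset.mem_univ _, rfl⟩
    have gInj : Function.Injective (fun i : ↥I => (⟨π i, hmem i⟩ : ↥J)) := by
      intro a b hab
      exact π.injective (Subtype.ext_iff.mp hab)
    have gSurj : Function.Surjective (fun i : ↥I => (⟨π i, hmem i⟩ : ↥J)) := by
      intro jj
      have : jj.1 ∈ Finset.univ.map π := by rw [hJ]; exact jj.2
      obtain ⟨a, -, ha⟩ := Finset.mem_map.mp this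
      exact ⟨a, Subtype.ext ha⟩
    refine ⟨Equiv.ofBijective _ ⟨gInj, gSurj⟩, Finset.mem_univ _, ?_⟩
    ext i
    rfl
  · intro e _
    rfl

section Char2
variable {k : Type*} [Field k] [CharP k 2]

theorem sign_smul_char2 {α : Type*} [Fintype α] [DecidableEq α]
    (σ : Equiv.Perm α) (x : k) : Equiv.Perm.sign σ • x = x := by
  rcases Int.units_eq_one_or (Equiv.Perm.sign σ) with h | h <;>
    rw [h] <;> simp [Units.smul_def, CharTwo.neg_eq]

theorem det_blocks (B : Matrix (Fin n) (Fin n) k) :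
    (fromBlocks 1 B B.transpose 1).det
      = ∑ q : Quad n,
          (∏ i : ↥q.1, B i.1 (q.2.2.1 i).1) * ∏ j : ↥q.2.1, B (q.2.2.2 j).1 j.1 := by
  classical
  rw [Matrix.det_apply]
  simp_rw [sign_smul_char2]
  rw [← Finset.sum_filter_of_ne (p := IsGood)
    (fun σ _ h => by
      by_contra hg
      exact h (prod_eq_zero_of_not_good B σ hg))]
  refine (Finset.sum_bij (i := fun (q : Quad n) (_ : q ∈ Finset.univ) => qPerm q)
    (fun q _ => Finset.mem_filter.mpr ⟨Finset.mem_univ _, isGood_quadPerm _ _ _ _⟩)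
    (fun q1 _ q2 _ h => qPerm_injective h)
    (fun σ hσ => by
      obtain ⟨q, hq⟩ := exists_quad_of_good σ (Finset.mem_filter.mp hσ).2
      exact ⟨q, Finset.mem_univ q, hq⟩)
    (fun q _ => (prod_quadPerm B q.1 q.2.1 q.2.2.1 q.2.2.2).symm)).symm

end Char2


/-- Over a field of characteristic 2, `det([[0,B],[Bᵀ,0]] + I)` equals the
square of the sum of the permanents of all square submatrices of `B`, and
this sum equals the partial permanent `per*(B)`. -/
theorem det_add_one_eq_subPermanentSum_sq {k : Type*} [Field k] [CharP k 2]
    {n : ℕ} (B : Matrix (Fin n) (Fin n) k) :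
    (Matrix.fromBlocks 0 B B.transpose 0 + 1).det = subPermanentSum B ^ 2 ∧
    subPermanentSum B = partialPermanent B := by
  classical
  refine ⟨?_, subPermanentSum_eq_partialPermanent B⟩
  have hM : (Matrix.fromBlocks 0 B B.transpose 0 + 1)
      = fromBlocks 1 B B.transpose 1 := by
    rw [← Matrix.fromBlocks_one, Matrix.fromBlocks_add]
    simp
  rw [hM, det_blocks]
  trans ∑ I : Finset (Fin n), ∑ J : Finset (Fin n),
      ∑ e : ↥I ≃ ↥J, (∏ i : ↥I, B i.1 (e i).1) ^ 2
  · rw [← Finset.univ_sigma_univ, Finset.sum_sigma]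
    refine Finset.sum_congr rfl fun I _ => ?_
    rw [← Finset.univ_sigma_univ, Finset.sum_sigma]
    refine Finset.sum_congr rfl fun J _ => ?_
    rw [Fintype.sum_prod_type]
    dsimp only
    show ∑ x : ↥I ≃ ↥J, ∑ y : ↥J ≃ ↥I, (∏ i : ↥I, B i.1 (x i).1) * ∏ j : ↥J, B (y j).1 j.1 = _
    rw [← Finset.sum_mul_sum]
    have hswap : (∑ f : ↥J ≃ ↥I, ∏ j : ↥J, B (f j).1 j.1)
        = ∑ e : ↥I ≃ ↥J, ∏ i : ↥I, B i.1 (e i).1 := by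
      refine Fintype.sum_bijective Equiv.symm Equiv.symm_bijective _ _ fun f => ?_
      rw [← Equiv.prod_comp f (fun i : ↥I => B i.1 (f.symm i).1)]
      exact Finset.prod_congr rfl fun j _ => by simp
    rw [hswap, ← pow_two, CharTwo.sum_sq]
  · simp only [subPermanentSum]
    rw [CharTwo.sum_sq]
    refine Finset.sum_congr rfl fun I _ => ?_
    rw [CharTwo.sum_sq]
    refine Finset.sum_congr rfl fun J _ => ?_
    rw [CharTwo.sum_sq]
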